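/- Let n, m ≥ 0, let r, r' ∈ ℝⁿ and t ∈ ℝᵐ. Let u, u' ∈ ℝ^{n+m} be the nonincreasing rearrangements of the concatenations (r₁,…,r_n,t₁,…,t_m) and (r'₁,…,r'_n,t₁,…,t_m) respectively, and let r↓, r'↓ ∈ ℝⁿ be the nonincreasing rearrangements of r and r'. If u_k ≥ u'_k for every k = 1, …, n+m, then r↓_k ≥ r'↓_k for every k = 1, …, n. (This is the combinatorial content of the statement that catalysis is impossible under the entrywise-domination criterion for Gaussian pure-state transformations: if the squeezing vector of ρ⊗ω dominates that of ρ'⊗ω, then the squeezing vector of ρ already dominates that of ρ'.) -/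

import Mathlib

/-- The nonincreasing rearrangement of a finite tuple of reals: sort ascendingly with
`Tuple.sort` and then reverse. -/
noncomputable def sortDesc {k : ℕ} (f : Fin k → ℝ) : Fin k → ℝ :=
  fun i => (f ∘ Tuple.sort f) i.rev

lemma sortDesc_antitone {k : ℕ} (f : Fin k → ℝ) : Antitone (sortDesc f) := by
  intro i j hij
  exact Tuple.monotone_sort f (Fin.rev_le_rev.mpr hij)

open Classical in
lemma le_sortDesc_iff {N : ℕ} (f : Fin N → ℝ) (a : ℝ) (j : Fin N) :
    a ≤ sortDesc f j ↔ (j : ℕ) < Fintype.card {i // a ≤ f i} := by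
  have hcard : Fintype.card {i // a ≤ sortDesc f i} = Fintype.card {i // a ≤ f i} := by
    refine Fintype.card_congr (Equiv.subtypeEquiv (Fin.revPerm.trans (Tuple.sort f)) ?_)
    intro i
    rfl
  rw [← hcard]
  rw [Fintype.card_subtype]
  convert (Tuple.lt_card_ge_iff_apply_ge_of_antitone (f := sortDesc f) (a := a) (j := j) (sortDesc_antitone f)).symm using 3

open Classical in
lemma card_append_le {n m : ℕ} (r : Fin n → ℝ) (t : Fin m → ℝ) (a : ℝ) :
    Fintype.card {i : Fin (n + m) // a ≤ Fin.append r t i}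
      = Fintype.card {i : Fin n // a ≤ r i} + Fintype.card {j : Fin m // a ≤ t j} := by
  simp_rw [Fintype.card_subtype, Finset.card_filter]
  rw [Fin.sum_univ_add]
  simp [Fin.append_left, Fin.append_right]

/-- **No catalysis for the entrywise-domination criterion.** If the nonincreasing
rearrangement of `(r, t)` dominates entrywise that of `(r', t)`, then the nonincreasing
rearrangement of `r` already dominates that of `r'`: appending a fixed catalyst vector `t`
cannot create entrywise domination of sorted squeezing vectors. -/
theorem no_catalysis (n m : ℕ) (r r' : Fin n → ℝ) (t : Fin m → ℝ)
    (h : ∀ k : Fin (n + m), sortDesc (Fin.append r' t) k ≤ sortDesc (Fin.append r t) k) :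
    ∀ k : Fin n, sortDesc r' k ≤ sortDesc r k := by
  classical
  intro k
  set a := sortDesc r' k with ha
  have h1 : (k : ℕ) < Fintype.card {i // a ≤ r' i} := (le_sortDesc_iff r' a k).mp le_rfl
  set j := Fintype.card {i : Fin m // a ≤ t i} with hj
  have hjm : j ≤ m := by
    simpa using Fintype.card_subtype_le (fun i : Fin m => a ≤ t i)
  have hkj : (k : ℕ) + j < n + m := by
    have := k.isLt
    omega
  have h2 : a ≤ sortDesc (Fin.append r' t) ⟨(k : ℕ) + j, hkj⟩ := by
    rw [le_sortDesc_iff, card_append_le]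
    convert Nat.add_lt_add_right h1 j using 2
  have h3 : a ≤ sortDesc (Fin.append r t) ⟨(k : ℕ) + j, hkj⟩ := h2.trans (h _)
  have h4 : (k : ℕ) + j < Fintype.card {i // a ≤ r i} + j := by
    have := (le_sortDesc_iff (Fin.append r t) a ⟨(k : ℕ) + j, hkj⟩).mp h3
    rwa [card_append_le] at this

  exact (le_sortDesc_iff r a k).mpr (by omega)
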